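/- Consider a finite list whose positions are each colored red, blue, or black. The minimum length of a valid sequence of adjacent transpositions (one after which every red element occurs below every blue element) equals Σ_{r red} B(r) + Σ_{j black} min{B(j), R(j)}, where B(x) is the number of blue elements below x in the original list and R(x) is the number of red elements above x in the original list. -/

import Mathlib

/-- The three colors. -/
inductive Col : Type
  | red
  | blue
  | black
deriving DecidableEq

/-- `l'` is obtained from `l` by one adjacent transposition (swap). -/
def AdjSwap {γ : Type*} (l l' : List γ) : Prop :=
  ∃ (p s : List γ) (x y : γ), l = p ++ x :: y :: s ∧ l' = p ++ y :: x :: s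

/-- `SwapSeqL k l l'` : `l'` is obtained from `l` by a sequence of `k`
adjacent transpositions. -/
def SwapSeqL {γ : Type*} : ℕ → List γ → List γ → Prop
  | 0, l, l' => l' = l
  | k + 1, l, l' => ∃ l'', AdjSwap l l'' ∧ SwapSeqL k l'' l'

/-- We represent the original list `(a₁, …, a_d)` by `List.finRange d`
(element `x : Fin d` starts at position `x`), with colors `color : Fin d → Col`.
`Bcnt color x` is the number of blue elements below (after) `x` in the
original list. -/
def Bcnt {d : ℕ} (color : Fin d → Col) (x : Fin d) : ℕ :=
  (Finset.univ.filter (fun y => color y = Col.blue ∧ x < y)).card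

/-- `Rcnt color x` is the number of red elements above (before) `x` in the
original list. -/
def Rcnt {d : ℕ} (color : Fin d → Col) (x : Fin d) : ℕ :=
  (Finset.univ.filter (fun y => color y = Col.red ∧ y < x)).card

theorem swapSeq_trans {γ : Type*} {k k' : ℕ} {l m n : List γ}
    (h : SwapSeqL k l m) (h' : SwapSeqL k' m n) : SwapSeqL (k + k') l n := by
  induction k generalizing l with
  | zero => simpa [SwapSeqL] using h ▸ h'
  | succ k ih =>
    obtain ⟨l'', hs, ht⟩ := h
    exact (show k + 1 + k' = (k + k') + 1 by omega) ▸ ⟨l'', hs, ih ht⟩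

theorem adjSwap_cons {γ : Type*} {l l' : List γ} (a : γ) (h : AdjSwap l l') :
    AdjSwap (a :: l) (a :: l') := by
  obtain ⟨p, s, x, y, h1, h2⟩ := h
  exact ⟨a :: p, s, x, y, by simp [h1], by simp [h2]⟩

theorem swapSeq_cons {γ : Type*} {k : ℕ} {l l' : List γ} (a : γ) (h : SwapSeqL k l l') :
    SwapSeqL k (a :: l) (a :: l') := by
  induction k generalizing l with
  | zero => simp [SwapSeqL] at h ⊢; simp [h]
  | succ k ih =>
    obtain ⟨l'', hs, ht⟩ := h
    exact ⟨a :: l'', adjSwap_cons a hs, ih ht⟩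

theorem swapSeq_move {γ : Type*} (a : γ) (u v : List γ) :
    SwapSeqL u.length (a :: (u ++ v)) (u ++ a :: v) := by
  induction u with
  | nil => rfl
  | cons b u ih =>
    refine ⟨b :: a :: (u ++ v), ⟨[], u ++ v, a, b, rfl, rfl⟩, ?_⟩
    exact swapSeq_cons b ih

def invC {γ : Type*} (p : γ → Bool) : List γ → ℕ
  | [] => 0
  | a :: t => (if p a then t.countP (fun x => !p x) else 0) + invC p t

theorem swapSeq_sort {γ : Type*} (p : γ → Bool) (l : List γ) :
    SwapSeqL (invC p l) l (l.filter (fun x => !p x) ++ l.filter p) := by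
  induction l with
  | nil => rfl
  | cons a t ih =>
    by_cases hpa : p a
    · have h1 : SwapSeqL (invC p t) (a :: t)
          (a :: (t.filter (fun x => !p x) ++ t.filter p)) := swapSeq_cons a ih
      have h2 := swapSeq_move a (t.filter (fun x => !p x)) (t.filter p)
      have h3 := swapSeq_trans h1 h2
      have hlen : (t.filter (fun x => !p x)).length = t.countP (fun x => !p x) :=
        List.countP_eq_length_filter.symm
      have : invC p (a :: t) = invC p t + (t.filter (fun x => !p x)).length := by
        simp [invC, hpa, hlen]; omega
      rw [this]
      simpa [List.filter_cons, hpa] using h3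
    · have h1 : SwapSeqL (invC p t) (a :: t)
          (a :: (t.filter (fun x => !p x) ++ t.filter p)) := swapSeq_cons a ih
      have : invC p (a :: t) = invC p t := by simp [invC, hpa]
      rw [this]
      simpa [List.filter_cons, hpa] using h1

theorem invC_map {γ δ : Type*} (p : δ → Bool) (g : γ → δ) (l : List γ) :
    invC p (l.map g) = invC (fun x => p (g x)) l := by
  induction l with
  | nil => rfl
  | cons a t ih => simp [invC, ih, List.countP_map]; rfl

theorem countP_finRange (n : ℕ) (q : Fin n → Bool) :
    (List.finRange n).countP q = (Finset.univ.filter (fun z => q z = true)).card := by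
  have h1 : Finset.univ.filter (fun z => q z = true)
      = ((List.finRange n).filter q).toFinset := by
    rw [List.toFinset_filter, List.toFinset_finRange]
  rw [h1, List.toFinset_card_of_nodup ((List.nodup_finRange n).filter q),
    List.countP_eq_length_filter]

theorem card_filter_succ {n : ℕ} (P : Fin (n + 1) → Prop) [DecidablePred P] (h0 : ¬ P 0) :
    (Finset.univ.filter P).card
      = (Finset.univ.filter (fun z : Fin n => P z.succ)).card := by
  rw [show Finset.univ.filter P
      = (Finset.univ.filter (fun z : Fin n => P z.succ)).map
          ⟨Fin.succ, Fin.succ_injective n⟩ from ?_, Finset.card_map]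
  ext y
  simp only [Finset.mem_filter, Finset.mem_univ, true_and, Finset.mem_map,
    Function.Embedding.coeFn_mk]
  constructor
  · intro hy
    have hne : y ≠ 0 := fun h => h0 (h ▸ hy)
    obtain ⟨z, rfl⟩ := Fin.exists_succ_eq.mpr hne
    exact ⟨z, hy, rfl⟩
  · rintro ⟨z, hz, rfl⟩; exact hz

theorem invC_finRange (n : ℕ) (p : Fin n → Bool) :
    invC p (List.finRange n)
      = ∑ x : Fin n, if p x then
          (Finset.univ.filter (fun y => p y = false ∧ x < y)).card else 0 := by
  induction n with
  | zero => simp [invC, List.finRange]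
  | succ n ih =>
    rw [List.finRange_succ]
    have hmap : invC p ((List.finRange n).map Fin.succ)
        = invC (fun z => p z.succ) (List.finRange n) := by
      induction (List.finRange n) with
      | nil => rfl
      | cons a t iht => simp [invC, iht, List.countP_map]; rfl
    rw [show invC p (0 :: (List.finRange n).map Fin.succ)
        = (if p 0 then ((List.finRange n).map Fin.succ).countP (fun x => !p x) else 0)
          + invC p ((List.finRange n).map Fin.succ) from rfl, hmap, ih]
    rw [Fin.sum_univ_succ]
    congr 1
    · -- head term
      rw [List.countP_map, countP_finRange n ((fun x => !p x) ∘ Fin.succ)]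
      have : (Finset.univ.filter (fun y : Fin (n+1) => p y = false ∧ (0:Fin (n+1)) < y)).card
          = (Finset.univ.filter (fun z : Fin n => p z.succ = false ∧ (0:Fin (n+1)) < z.succ)).card :=
        card_filter_succ _ (by simp)
      by_cases hp0 : p 0 <;> simp [hp0, this, Fin.succ_pos, Function.comp]
    · -- tail terms
      refine Finset.sum_congr rfl (fun x _ => ?_)
      have : (Finset.univ.filter (fun y : Fin (n+1) => p y = false ∧ x.succ < y)).card
          = (Finset.univ.filter (fun z : Fin n => p z.succ = false ∧ x.succ < z.succ)).card :=
        card_filter_succ _ (by simp [Fin.pos_iff_ne_zero, Fin.lt_iff_val_lt_val])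
      simp only [this, Fin.succ_lt_succ_iff]

def keyc {d : ℕ} (color : Fin d → Col) (x : Fin d) : Bool :=
  decide (color x = Col.red ∨ (color x = Col.black ∧ Bcnt color x ≤ Rcnt color x))

theorem Bcnt_anti {d : ℕ} (color : Fin d → Col) {x y : Fin d} (h : x ≤ y) :
    Bcnt color y ≤ Bcnt color x :=
  Finset.card_le_card (by
    intro z hz
    simp only [Finset.mem_filter, Finset.mem_univ, true_and] at *
    exact ⟨hz.1, lt_of_le_of_lt h hz.2⟩)

theorem Rcnt_mono {d : ℕ} (color : Fin d → Col) {x y : Fin d} (h : x ≤ y) :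
    Rcnt color x ≤ Rcnt color y :=
  Finset.card_le_card (by
    intro z hz
    simp only [Finset.mem_filter, Finset.mem_univ, true_and] at *
    exact ⟨hz.1, lt_of_lt_of_le hz.2 h⟩)

theorem count_identity (d : ℕ) (color : Fin d → Col) :
    (∑ x : Fin d, if keyc color x = true then
        (Finset.univ.filter (fun y => keyc color y = false ∧ x < y)).card else 0)
    = (Finset.univ.filter (fun x => color x = Col.red)).sum (fun x => Bcnt color x) +
        (Finset.univ.filter (fun x => color x = Col.black)).sum
          (fun x => min (Bcnt color x) (Rcnt color x)) := by
  classical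
  set w1 : Fin d → Fin d → ℕ := fun x y =>
    if color x = Col.red ∧ color y = Col.blue ∧ x < y then 1 else 0 with hw1
  set w2 : Fin d → Fin d → ℕ := fun x y =>
    if color x = Col.black ∧ Bcnt color x ≤ Rcnt color x ∧ color y = Col.blue ∧ x < y
    then 1 else 0 with hw2
  set w3 : Fin d → Fin d → ℕ := fun x y =>
    if color x = Col.red ∧ color y = Col.black ∧ ¬ (Bcnt color y ≤ Rcnt color y) ∧ x < y
    then 1 else 0 with hw3
  have hLHS : (∑ x : Fin d, if keyc color x = true then
        (Finset.univ.filter (fun y => keyc color y = false ∧ x < y)).card else 0)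
      = ∑ x : Fin d, ∑ y : Fin d, (w1 x y + w2 x y + w3 x y) := by
    refine Finset.sum_congr rfl (fun x _ => ?_)
    rw [Finset.card_filter]
    have step1 : (if keyc color x = true then
          (∑ y : Fin d, if keyc color y = false ∧ x < y then 1 else 0) else 0)
        = ∑ y : Fin d, if keyc color x = true ∧ keyc color y = false ∧ x < y then 1 else 0 := by
      by_cases h : keyc color x = true <;> simp [h]
    rw [step1]
    refine Finset.sum_congr rfl (fun y _ => ?_)
    have hx : keyc color x = true ↔
        (color x = Col.red ∨ (color x = Col.black ∧ Bcnt color x ≤ Rcnt color x)) := by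
      simp [keyc]
    have hy : keyc color y = false ↔
        ¬ (color y = Col.red ∨ (color y = Col.black ∧ Bcnt color y ≤ Rcnt color y)) := by
      simp [keyc]
    simp only [hw1, hw2, hw3]
    by_cases hxy : x < y
    · have hmono : Bcnt color x ≤ Rcnt color x → ¬ (Bcnt color y ≤ Rcnt color y) → False := by
        intro h1 h3
        exact h3 (le_trans (Bcnt_anti color (le_of_lt hxy))
          (le_trans h1 (Rcnt_mono color (le_of_lt hxy))))
      rcases hcx : color x <;> rcases hcy : color y <;>
        by_cases h1 : Bcnt color x ≤ Rcnt color x <;>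
        by_cases h2 : Bcnt color y ≤ Rcnt color y <;>
        simp [hx, hy, hcx, hcy, hxy, h1, h2] <;>
        first
          | omega
          | exact (hmono h1 h2).elim
          | exact absurd h1 (fun h1' => hmono h1' h2)
          | exact lt_of_not_le (fun h1' => hmono h1' h2)
    · simp [hxy, hx, hy]
  rw [hLHS]
  simp only [Finset.sum_add_distrib]
  have e1 : (∑ x : Fin d, ∑ y : Fin d, w1 x y)
      = (Finset.univ.filter (fun x => color x = Col.red)).sum (fun x => Bcnt color x) := by
    rw [Finset.sum_filter]
    refine Finset.sum_congr rfl (fun x _ => ?_)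
    by_cases hcx : color x = Col.red
    · rw [if_pos hcx, Bcnt, Finset.card_filter]
      refine Finset.sum_congr rfl (fun y _ => ?_)
      simp [hw1, hcx]
    · rw [if_neg hcx]
      refine Finset.sum_eq_zero (fun y _ => ?_)
      simp only [hw1]
      rw [if_neg (fun h => hcx h.1)]
  have e2 : (∑ x : Fin d, ∑ y : Fin d, w2 x y)
      = ∑ x : Fin d, (if color x = Col.black ∧ Bcnt color x ≤ Rcnt color x
          then Bcnt color x else 0) := by
    refine Finset.sum_congr rfl (fun x _ => ?_)
    by_cases hc : color x = Col.black ∧ Bcnt color x ≤ Rcnt color x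
    · rw [if_pos hc, Bcnt, Finset.card_filter]
      refine Finset.sum_congr rfl (fun y _ => ?_)
      simp [hw2, hc.1, hc.2]
    · rw [if_neg hc]
      refine Finset.sum_eq_zero (fun y _ => ?_)
      simp only [hw2]
      rw [if_neg (fun h => hc ⟨h.1, h.2.1⟩)]
  have e3 : (∑ x : Fin d, ∑ y : Fin d, w3 x y)
      = ∑ y : Fin d, (if color y = Col.black ∧ ¬ (Bcnt color y ≤ Rcnt color y)
          then Rcnt color y else 0) := by
    rw [Finset.sum_comm]
    refine Finset.sum_congr rfl (fun y _ => ?_)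
    by_cases hc : color y = Col.black ∧ ¬ (Bcnt color y ≤ Rcnt color y)
    · rw [if_pos hc, Rcnt, Finset.card_filter]
      refine Finset.sum_congr rfl (fun x _ => ?_)
      have h2' := lt_of_not_ge hc.2
      simp [hw3, hc.1, hc.2, h2']
    · rw [if_neg hc]
      refine Finset.sum_eq_zero (fun x _ => ?_)
      simp only [hw3]
      rw [if_neg (fun h => hc ⟨h.2.1, h.2.2.1⟩)]
  have e4 : (Finset.univ.filter (fun x => color x = Col.black)).sum
        (fun x => min (Bcnt color x) (Rcnt color x))
      = (∑ x : Fin d, (if color x = Col.black ∧ Bcnt color x ≤ Rcnt color x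
            then Bcnt color x else 0))
        + (∑ y : Fin d, (if color y = Col.black ∧ ¬ (Bcnt color y ≤ Rcnt color y)
            then Rcnt color y else 0)) := by
    rw [Finset.sum_filter, ← Finset.sum_add_distrib]
    refine Finset.sum_congr rfl (fun x _ => ?_)
    by_cases hcx : color x = Col.black <;>
      by_cases h1 : Bcnt color x ≤ Rcnt color x <;>
      simp [hcx, h1, min_def]
  rw [e1, e2, e3, e4]
  omega

theorem adjSwap_perm {γ : Type*} {l l' : List γ} (h : AdjSwap l l') : l'.Perm l := by
  obtain ⟨p, s, x, y, rfl, rfl⟩ := h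
  exact (List.Perm.swap x y s).append_left p

def Dset {d : ℕ} (m : List (Fin d)) : Finset (Fin d × Fin d) :=
  Finset.univ.filter (fun q => q.1 < q.2 ∧ m.idxOf q.2 < m.idxOf q.1)

theorem swap_indexOf_iff {d : ℕ} {p s : List (Fin d)} {x y : Fin d}
    (hxp : x ∉ p) (hyp : y ∉ p) (hxy : x ≠ y) (u v : Fin d)
    (huv : ¬(u = x ∧ v = y)) (hvu : ¬(u = y ∧ v = x)) :
    ((p ++ y :: x :: s).idxOf v < (p ++ y :: x :: s).idxOf u) ↔
      ((p ++ x :: y :: s).idxOf v < (p ++ x :: y :: s).idxOf u) := by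
  have hmx : (p ++ x :: y :: s).idxOf x = p.length := by
    rw [List.idxOf_append_of_notMem hxp, List.idxOf_cons_self]; omega
  have hmy : (p ++ x :: y :: s).idxOf y = p.length + 1 := by
    rw [List.idxOf_append_of_notMem hyp, List.idxOf_cons_ne _ hxy,
      List.idxOf_cons_self]
  have hm'y : (p ++ y :: x :: s).idxOf y = p.length := by
    rw [List.idxOf_append_of_notMem hyp, List.idxOf_cons_self]; omega
  have hm'x : (p ++ y :: x :: s).idxOf x = p.length + 1 := by
    rw [List.idxOf_append_of_notMem hxp, List.idxOf_cons_ne _ hxy.symm,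
      List.idxOf_cons_self]
  have hother : ∀ w, w ≠ x → w ≠ y →
      (p ++ x :: y :: s).idxOf w = (p ++ y :: x :: s).idxOf w ∧
        ((p ++ x :: y :: s).idxOf w < p.length ∨
          p.length + 2 ≤ (p ++ x :: y :: s).idxOf w) := by
    intro w hwx hwy
    by_cases hwp : w ∈ p
    · rw [List.idxOf_append_of_mem hwp, List.idxOf_append_of_mem hwp]
      exact ⟨rfl, Or.inl (List.idxOf_lt_length_iff.mpr hwp)⟩
    · rw [List.idxOf_append_of_notMem hwp, List.idxOf_append_of_notMem hwp,
        List.idxOf_cons_ne _ hwx.symm, List.idxOf_cons_ne _ hwy.symm,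
        List.idxOf_cons_ne _ hwy.symm, List.idxOf_cons_ne _ hwx.symm]
      exact ⟨rfl, Or.inr (by omega)⟩
  by_cases hux : u = x
  · subst hux
    by_cases hvy : v = y
    · exact absurd ⟨rfl, hvy⟩ huv
    · by_cases hvx : v = u
      · subst hvx; omega
      · obtain ⟨he, hr⟩ := hother v hvx hvy
        omega
  · by_cases huy : u = y
    · subst huy
      by_cases hvx : v = x
      · exact absurd ⟨rfl, hvx⟩ hvu
      · by_cases hvy : v = u
        · subst hvy; omega
        · obtain ⟨he, hr⟩ := hother v hvx hvy
          omega
    · obtain ⟨heu, hru⟩ := hother u hux huy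
      by_cases hvx : v = x
      · subst hvx; omega
      · by_cases hvy : v = y
        · subst hvy; omega
        · obtain ⟨hev, hrv⟩ := hother v hvx hvy
          omega

theorem Dset_adjSwap_le {d : ℕ} {m m' : List (Fin d)} (hm : m.Nodup) (h : AdjSwap m m') :
    (Dset m').card ≤ (Dset m).card + 1 := by
  obtain ⟨p, s, x, y, rfl, rfl⟩ := h
  have hd := (List.nodup_append'.mp hm).2.2
  have hxp : x ∉ p := fun hx => hd hx (by simp)
  have hyp : y ∉ p := fun hy => hd hy (by simp)
  have hxy : x ≠ y := by
    have h2 := (List.nodup_append'.mp hm).2.1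
    rcases List.nodup_cons.mp h2 with ⟨hxm, _⟩
    exact fun h => hxm (h ▸ List.mem_cons_self (a := y) (l := s))
  have hsub : Dset (p ++ y :: x :: s) ⊆
      insert (if x < y then (x, y) else (y, x)) (Dset (p ++ x :: y :: s)) := by
    intro q hq
    simp only [Dset, Finset.mem_filter, Finset.mem_univ, true_and] at hq
    rw [Finset.mem_insert]
    by_cases hq1 : (q.1 = x ∧ q.2 = y) ∨ (q.1 = y ∧ q.2 = x)
    · left
      rcases hq1 with ⟨h1, h2⟩ | ⟨h1, h2⟩
      · have hlt : x < y := by rw [← h1, ← h2]; exact hq.1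
        rw [if_pos hlt, ← h1, ← h2]
      · have hlt : y < x := by rw [← h1, ← h2]; exact hq.1
        rw [if_neg (asymm hlt), ← h1, ← h2]
    · right
      push_neg at hq1
      simp only [Dset, Finset.mem_filter, Finset.mem_univ, true_and]
      refine ⟨hq.1, ?_⟩
      rw [← swap_indexOf_iff hxp hyp hxy q.1 q.2 (fun h => (hq1.1 h.1) h.2)
        (fun h => (hq1.2 h.1) h.2)]
      exact hq.2
  calc (Dset (p ++ y :: x :: s)).card
      ≤ (insert (if x < y then (x, y) else (y, x)) (Dset (p ++ x :: y :: s))).card :=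
        Finset.card_le_card hsub
    _ ≤ (Dset (p ++ x :: y :: s)).card + 1 := Finset.card_insert_le _ _

theorem Dset_swapSeq {d : ℕ} {k : ℕ} {l l' : List (Fin d)} (hl : l.Nodup)
    (h : SwapSeqL k l l') : (Dset l').card ≤ (Dset l).card + k := by
  induction k generalizing l with
  | zero => rw [show l' = l from h]; omega
  | succ k ih =>
    obtain ⟨l'', hs, ht⟩ := h
    have hnd : l''.Nodup := (adjSwap_perm hs).nodup_iff.mpr hl
    have h1 := Dset_adjSwap_le hl hs
    have h2 := ih hnd ht
    omega

theorem Dset_finRange (d : ℕ) : Dset (List.finRange d) = ∅ := by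
  ext q
  simp only [Dset, Finset.mem_filter, Finset.mem_univ, true_and, Finset.notMem_empty,
    iff_false, not_and, List.idxOf_finRange]
  intro h1 h2
  exact absurd h1 (not_lt.mpr (le_of_lt (by exact_mod_cast h2)))

theorem card_pairs {d : ℕ} (A : Fin d → Prop) (Bp : Fin d → Fin d → Prop)
    [DecidablePred A] [∀ x, DecidablePred (Bp x)] :
    ((Finset.univ : Finset (Fin d × Fin d)).filter (fun q => A q.1 ∧ Bp q.1 q.2)).card
      = ∑ x ∈ Finset.univ.filter A, (Finset.univ.filter (Bp x)).card := by
  rw [Finset.card_filter, Finset.sum_filter, Fintype.sum_prod_type]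
  refine Finset.sum_congr rfl (fun x _ => ?_)
  by_cases hA : A x
  · rw [if_pos hA, Finset.card_filter]
    exact Finset.sum_congr rfl (fun y _ => by simp [hA])
  · rw [if_neg hA]
    exact Finset.sum_eq_zero (fun y _ => by simp [hA])

theorem lower_bound {d : ℕ} (color : Fin d → Col) {l' : List (Fin d)}
    (hcond : ∀ r b : Fin d, color r = Col.red → color b = Col.blue →
      l'.idxOf b < l'.idxOf r) :
    (Finset.univ.filter (fun x => color x = Col.red)).sum (fun x => Bcnt color x) +
      (Finset.univ.filter (fun x => color x = Col.black)).sum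
        (fun x => min (Bcnt color x) (Rcnt color x)) ≤ (Dset l').card := by
  classical
  set T := Dset l' with hT
  have hmemT : ∀ q : Fin d × Fin d, q.1 < q.2 → l'.idxOf q.2 < l'.idxOf q.1 →
      q ∈ T := by
    intro q h1 h2; simp [hT, Dset, h1, h2]
  set S0 := T.filter (fun q => color q.1 = Col.red ∧ color q.2 = Col.blue) with hS0
  set SS : Fin d → Finset (Fin d × Fin d) := fun j =>
    T.filter (fun q => (q.1 = j ∧ color q.2 ≠ Col.black) ∨
      (q.2 = j ∧ color q.1 ≠ Col.black)) with hSS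
  set blacks := Finset.univ.filter (fun x => color x = Col.black) with hbl
  have hS0card : (Finset.univ.filter (fun x => color x = Col.red)).sum
      (fun x => Bcnt color x) ≤ S0.card := by
    have hcp : ((Finset.univ : Finset (Fin d × Fin d)).filter
        (fun q => color q.1 = Col.red ∧ (color q.2 = Col.blue ∧ q.1 < q.2))).card
        = ∑ x ∈ Finset.univ.filter (fun x => color x = Col.red), Bcnt color x := by
      rw [card_pairs (fun x => color x = Col.red)
        (fun x y => color y = Col.blue ∧ x < y)]
      exact Finset.sum_congr rfl (fun x _ => by rw [Bcnt])
    rw [← hcp]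
    apply Finset.card_le_card
    intro q hq
    simp only [Finset.mem_filter, Finset.mem_univ, true_and] at hq
    obtain ⟨h1, h2, h3⟩ := hq
    exact Finset.mem_filter.mpr ⟨hmemT q h3 (hcond q.1 q.2 h1 h2), h1, h2⟩
  have hSScard : ∀ j ∈ blacks, min (Bcnt color j) (Rcnt color j) ≤ (SS j).card := by
    intro j hj
    by_cases hcase : ∀ b, color b = Col.blue → j < b → l'.idxOf b < l'.idxOf j
    · refine le_trans (min_le_left _ _) ?_
      rw [Bcnt]
      apply Finset.card_le_card_of_injOn (fun b => (j, b))
      · intro b hb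
        simp only [Finset.mem_coe, Finset.mem_filter, Finset.mem_univ, true_and] at hb
        refine Finset.mem_filter.mpr ⟨hmemT (j, b) hb.2 (hcase b hb.1 hb.2), ?_⟩
        exact Or.inl ⟨rfl, by simp [hb.1]⟩
      · intro a _ b _ h
        simpa using h
    · push_neg at hcase
      obtain ⟨b0, hb0blue, hb0lt, hb0idx⟩ := hcase
      refine le_trans (min_le_right _ _) ?_
      rw [Rcnt]
      apply Finset.card_le_card_of_injOn (fun r => (r, j))
      · intro r hr
        simp only [Finset.mem_coe, Finset.mem_filter, Finset.mem_univ, true_and] at hr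
        refine Finset.mem_filter.mpr
          ⟨hmemT (r, j) hr.2 (lt_of_le_of_lt hb0idx (hcond r b0 hr.1 hb0blue)), ?_⟩
        exact Or.inr ⟨rfl, by simp [hr.1]⟩
      · intro a _ b _ h
        simpa using h
  have hjblack : ∀ j ∈ blacks, color j = Col.black := by
    intro j hj; exact (Finset.mem_filter.mp hj).2
  have hdisj1 : Disjoint S0 (blacks.biUnion SS) := by
    rw [Finset.disjoint_biUnion_right]
    intro j hj
    rw [Finset.disjoint_left]
    intro q hq0 hqj
    obtain ⟨-, hr, hb⟩ := Finset.mem_filter.mp hq0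
    rcases (Finset.mem_filter.mp hqj).2 with ⟨h1, -⟩ | ⟨h1, -⟩
    · rw [h1, hjblack j hj] at hr; exact Col.noConfusion hr
    · rw [h1, hjblack j hj] at hb; exact Col.noConfusion hb
  have hdisj2 : ∀ i ∈ blacks, ∀ j ∈ blacks, i ≠ j → Disjoint (SS i) (SS j) := by
    intro i hi j hj hij
    rw [Finset.disjoint_left]
    intro q hqi hqj
    rcases (Finset.mem_filter.mp hqi).2 with ⟨h1, h2⟩ | ⟨h1, h2⟩ <;>
      rcases (Finset.mem_filter.mp hqj).2 with ⟨h3, h4⟩ | ⟨h3, h4⟩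
    · exact hij (h1 ▸ h3 ▸ rfl)
    · exact h4 (h1 ▸ hjblack i hi)
    · exact h2 (h3 ▸ hjblack j hj)
    · exact hij (h1 ▸ h3 ▸ rfl)
  have hcup : S0 ∪ blacks.biUnion SS ⊆ T := by
    apply Finset.union_subset (Finset.filter_subset _ _)
    exact Finset.biUnion_subset.mpr (fun j _ => Finset.filter_subset _ _)
  calc (Finset.univ.filter (fun x => color x = Col.red)).sum (fun x => Bcnt color x) +
        blacks.sum (fun x => min (Bcnt color x) (Rcnt color x))
      ≤ S0.card + ∑ j ∈ blacks, (SS j).card :=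
        Nat.add_le_add hS0card (Finset.sum_le_sum hSScard)
    _ = (S0 ∪ blacks.biUnion SS).card := by
        rw [Finset.card_union_of_disjoint hdisj1, Finset.card_biUnion hdisj2]
    _ ≤ T.card := Finset.card_le_card hcup

/-- The minimum length of a sequence of adjacent transpositions
after which every red element occurs below (after) every blue element equals
`Σ_{r red} B(r) + Σ_{j black} min (B j) (R j)`. -/
theorem min_swaps_red_below_blue (d : ℕ) (color : Fin d → Col) :
    IsLeast {k : ℕ | ∃ l' : List (Fin d), SwapSeqL k (List.finRange d) l' ∧
        ∀ r b : Fin d, color r = Col.red → color b = Col.blue →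
          l'.idxOf b < l'.idxOf r}
      ((Finset.univ.filter (fun x => color x = Col.red)).sum (fun x => Bcnt color x) +
        (Finset.univ.filter (fun x => color x = Col.black)).sum
          (fun x => min (Bcnt color x) (Rcnt color x))) := by
  classical
  constructor
  · -- membership: the stable partition by `keyc` works
    have hk : invC (keyc color) (List.finRange d)
        = (Finset.univ.filter (fun x => color x = Col.red)).sum (fun x => Bcnt color x) +
          (Finset.univ.filter (fun x => color x = Col.black)).sum
            (fun x => min (Bcnt color x) (Rcnt color x)) :=
      (invC_finRange d (keyc color)).trans (count_identity d color)
    refine ⟨(List.finRange d).filter (fun x => !keyc color x)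
        ++ (List.finRange d).filter (keyc color), ?_, ?_⟩
    · rw [← hk]
      exact swapSeq_sort (keyc color) (List.finRange d)
    · intro r b hr hb
      set F := (List.finRange d).filter (fun x => !keyc color x) with hF
      have hbF : b ∈ F := by
        rw [hF]
        exact List.mem_filter.mpr ⟨List.mem_finRange b, by simp [keyc, hb]⟩
      have hrF : r ∉ F := by
        intro hrF
        have := (List.mem_filter.mp hrF).2
        simp [keyc, hr] at this
      rw [List.idxOf_append_of_mem hbF, List.idxOf_append_of_notMem hrF]
      have hlen : F.idxOf b < F.length := List.idxOf_lt_length_iff.mpr hbF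
      omega
  · -- lower bound
    rintro k ⟨l', hseq, hcond⟩
    have h1 := lower_bound color hcond
    have h2 := Dset_swapSeq (List.nodup_finRange d) hseq
    rw [Dset_finRange] at h2
    simp only [Finset.card_empty, Nat.zero_add] at h2
    omega
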